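/- Let a and b be coprime nonzero integers and let d > 1 be an odd integer. Then the following statements are equivalent: (1) d ∈ OG_{(a,b)}; (2) every positive divisor j of d satisfies j ∈ OG_{(a,b)}; (3) every prime divisor p of d satisfies p ∈ OG_{(a,b)}. -/

import Mathlib

/-- `d ∈ OG_{(a,b)}`: `d` divides `a^k + b^k` for some odd integer `k ≥ 1`. -/
def OddlyGood (a b : ℤ) (d : ℕ) : Prop :=
  ∃ k : ℕ, Odd k ∧ 1 ≤ k ∧ (d : ℤ) ∣ a ^ k + b ^ k

lemma oddlyGood_of_dvd {a b : ℤ} {d j : ℕ} (hj : j ∣ d) (h : OddlyGood a b d) :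
    OddlyGood a b j := by
  obtain ⟨k, hk, hk1, hkd⟩ := h
  exact ⟨k, hk, hk1, dvd_trans (Int.natCast_dvd_natCast.mpr hj) hkd⟩

lemma oddlyGood_mul {a b : ℤ} {m n : ℕ} (hm : OddlyGood a b m) (hn : OddlyGood a b n)
    (hcop : Nat.Coprime m n) : OddlyGood a b (m * n) := by
  obtain ⟨k, hk, hk1, hkd⟩ := hm
  obtain ⟨l, hl, hl1, hld⟩ := hn
  refine ⟨k * l, hk.mul hl, Nat.one_le_iff_ne_zero.mpr (by positivity), ?_⟩
  have h1 : (m : ℤ) ∣ a ^ (k * l) + b ^ (k * l) := by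
    rw [pow_mul, pow_mul]
    exact hkd.trans (Odd.add_dvd_pow_add_pow (a ^ k) (b ^ k) hl)
  have h2 : (n : ℤ) ∣ a ^ (k * l) + b ^ (k * l) := by
    rw [mul_comm, pow_mul, pow_mul]
    exact hld.trans (Odd.add_dvd_pow_add_pow (a ^ l) (b ^ l) hk)
  have : IsCoprime (m : ℤ) (n : ℤ) := Int.isCoprime_iff_gcd_eq_one.mpr (by
    rwa [Int.gcd_natCast_natCast])
  exact_mod_cast this.mul_dvd h1 h2

lemma oddlyGood_prime_pow {a b : ℤ} (hab : IsCoprime a b) {p : ℕ} (hp : p.Prime)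
    (hpodd : Odd p) (h : OddlyGood a b p) (e : ℕ) : OddlyGood a b (p ^ e) := by
  obtain ⟨k, hk, hk1, hkd⟩ := h
  have hKodd : Odd (k * p ^ e) := hk.mul (hpodd.pow)
  refine ⟨k * p ^ e, hKodd, Nat.one_le_iff_ne_zero.mpr (Nat.mul_ne_zero (by omega) (pow_ne_zero e hp.pos.ne')), ?_⟩
  have hx : ¬ (p : ℤ) ∣ a ^ k := by
    intro hdvd
    have hpa : (p : ℤ) ∣ a := (Nat.prime_iff_prime_int.mp hp).dvd_of_dvd_pow hdvd
    have hpb : (p : ℤ) ∣ b := by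
      have hbk : (p : ℤ) ∣ b ^ k := by
        have := dvd_sub hkd hdvd
        simpa using this
      exact (Nat.prime_iff_prime_int.mp hp).dvd_of_dvd_pow hbk
    exact (Nat.prime_iff_prime_int.mp hp).not_unit (hab.isUnit_of_dvd' hpa hpb)
  have hLTE := Int.emultiplicity_pow_add_pow hp hpodd hkd hx (n := p ^ e) hpodd.pow
  have hle : (e : ℕ∞) ≤ emultiplicity (p : ℤ) ((a ^ k) ^ (p ^ e) + (b ^ k) ^ (p ^ e)) := by
    rw [hLTE, emultiplicity_pow_self_of_prime hp.prime e]
    exact le_add_self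
  have := pow_dvd_of_le_emultiplicity hle
  rw [pow_mul, pow_mul]
  exact_mod_cast (by push_cast; exact this : ((p : ℤ) ^ e) ∣ _)

lemma oddlyGood_of_forall_prime {a b : ℤ} (hab : IsCoprime a b) :
    ∀ d : ℕ, Odd d → (∀ p : ℕ, p.Prime → p ∣ d → OddlyGood a b p) → OddlyGood a b d := by
  intro d
  induction d using Nat.recOnPosPrimePosCoprime with
  | prime_pow p n hp hn =>
    intro hodd hprimes
    have hp' : p.Prime := hp
    have hpodd : Odd p := hp'.odd_of_ne_two (by
      rintro rfl
      exact (Nat.not_odd_iff_even.mpr (Nat.even_pow.mpr ⟨even_two, hn.ne'⟩)) hodd)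
    exact oddlyGood_prime_pow hab hp' hpodd (hprimes p hp' (dvd_pow_self p hn.ne')) n
  | zero => intro hodd; simp at hodd
  | one => intro _ _; exact ⟨1, odd_one, le_rfl, by simp⟩
  | coprime m n hm hn hcop ihm ihn =>
    intro hodd hprimes
    rw [Nat.odd_mul] at hodd
    exact oddlyGood_mul
      (ihm hodd.1 fun p hp hpd => hprimes p hp (hpd.mul_right n))
      (ihn hodd.2 fun p hp hpd => hprimes p hp (hpd.mul_left m)) hcop

theorem oddlyGood_tfae (a b : ℤ) (ha : a ≠ 0) (hb : b ≠ 0) (hab : IsCoprime a b)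
    (d : ℕ) (hd : 1 < d) (hdodd : Odd d) :
    (OddlyGood a b d ↔ ∀ j : ℕ, 0 < j → j ∣ d → OddlyGood a b j) ∧
      (OddlyGood a b d ↔ ∀ p : ℕ, p.Prime → p ∣ d → OddlyGood a b p) := by
  constructor
  · constructor
    · intro h j _ hjd
      exact oddlyGood_of_dvd hjd h
    · intro h
      exact h d (by omega) dvd_rfl
  · constructor
    · intro h p hp hpd
      exact oddlyGood_of_dvd hpd h
    · intro h
      exact oddlyGood_of_forall_prime hab d hdodd h
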